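/- Let σ(X) = -Xᵀ on gl_N(ℂ) and let o_N^{tw}[s,s⁻¹] be the twisted loop algebra of fixed points of Θ(X ⊗ s^r) = σ(X) ⊗ s^{-r}. For each m ≥ 0, the ℂ-span K_m^{tw} of the elements E_{ij} s^r (s-1)^m - E_{ji} s^{-r} (s⁻¹ - 1)^m, for all 1 ≤ i,j ≤ N and r ∈ ℤ, is a Lie ideal of o_N^{tw}[s,s⁻¹]. -/

import Mathlib

open LaurentPolynomial TensorProduct Matrix

noncomputable section

/-- The involution `σ(X) = -Xᵀ` of `gl_N(ℂ)`, as a linear map. -/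
def sigmaO (N : ℕ) : Matrix (Fin N) (Fin N) ℂ →ₗ[ℂ] Matrix (Fin N) (Fin N) ℂ :=
  -(Matrix.transposeLinearEquiv (Fin N) (Fin N) ℂ ℂ).toLinearMap

/-- The twisting automorphism `Θ(X ⊗ s^r) = σ(X) ⊗ s^{-r}` of the loop algebra. -/
def ThetaO (N : ℕ) :
    ℂ[T;T⁻¹] ⊗[ℂ] Matrix (Fin N) (Fin N) ℂ →ₗ[ℂ] ℂ[T;T⁻¹] ⊗[ℂ] Matrix (Fin N) (Fin N) ℂ :=
  TensorProduct.map (LaurentPolynomial.invert : ℂ[T;T⁻¹] ≃ₐ[ℂ] ℂ[T;T⁻¹]).toLinearMap (sigmaO N)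

/-- The spanning elements `E_{ij} s^r (s-1)^m - E_{ji} s^{-r} (s⁻¹-1)^m` of `K_m^{tw}`. -/
def Ktw (N m : ℕ) : Set (ℂ[T;T⁻¹] ⊗[ℂ] Matrix (Fin N) (Fin N) ℂ) :=
  {z | ∃ (i j : Fin N) (r : ℤ),
    z = (T r * (T 1 - 1) ^ m) ⊗ₜ[ℂ] Matrix.single i j (1 : ℂ)
      - (T (-r) * (T (-1) - 1) ^ m) ⊗ₜ[ℂ] Matrix.single j i 1}

namespace Stmt14Aux

abbrev LA (N : ℕ) := ℂ[T;T⁻¹] ⊗[ℂ] Matrix (Fin N) (Fin N) ℂ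

variable {N : ℕ}

/-- The spanning element as a definition. -/
def G (N m : ℕ) (i j : Fin N) (r : ℤ) : LA N :=
  (T r * (T 1 - 1) ^ m) ⊗ₜ[ℂ] Matrix.single i j (1 : ℂ)
    - (T (-r) * (T (-1) - 1) ^ m) ⊗ₜ[ℂ] Matrix.single j i 1

lemma G_mem_Ktw (m : ℕ) (i j : Fin N) (r : ℤ) : G N m i j r ∈ Ktw N m := ⟨i, j, r, rfl⟩

/- Bilinearity of the bracket, restated for the relevant `Bracket` instance. -/
lemma LA_sub_lie (x y z : LA N) : ⁅x - y, z⁆ = ⁅x, z⁆ - ⁅y, z⁆ := by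
  letI := LieRing.ofAssociativeRing (A := LA N); exact sub_lie x y z
lemma LA_lie_sub (x y z : LA N) : ⁅x, y - z⁆ = ⁅x, y⁆ - ⁅x, z⁆ := by
  letI := LieRing.ofAssociativeRing (A := LA N); exact lie_sub x y z
lemma LA_add_lie (x y z : LA N) : ⁅x + y, z⁆ = ⁅x, z⁆ + ⁅y, z⁆ := by
  letI := LieRing.ofAssociativeRing (A := LA N); exact add_lie x y z
lemma LA_lie_add (x y z : LA N) : ⁅x, y + z⁆ = ⁅x, y⁆ + ⁅x, z⁆ := by
  letI := LieRing.ofAssociativeRing (A := LA N); exact lie_add x y z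
lemma LA_zero_lie (z : LA N) : ⁅(0 : LA N), z⁆ = 0 := by
  letI := LieRing.ofAssociativeRing (A := LA N); exact zero_lie z
lemma LA_lie_zero (x : LA N) : ⁅x, (0 : LA N)⁆ = 0 := by
  letI := LieRing.ofAssociativeRing (A := LA N); exact lie_zero x

lemma LA_smul_lie (c : ℂ) (x z : LA N) : ⁅c • x, z⁆ = c • ⁅x, z⁆ := by
  simp only [Ring.lie_def, smul_mul_assoc, mul_smul_comm, smul_sub]

lemma LA_lie_smul (c : ℂ) (x z : LA N) : ⁅x, c • z⁆ = c • ⁅x, z⁆ := by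
  simp only [Ring.lie_def, smul_mul_assoc, mul_smul_comm, smul_sub]

lemma LA_lie_tmul (s t : ℂ[T;T⁻¹]) (X Y : Matrix (Fin N) (Fin N) ℂ) :
    ⁅(s ⊗ₜ[ℂ] X : LA N), t ⊗ₜ[ℂ] Y⁆ = (s * t) ⊗ₜ[ℂ] ⁅X, Y⁆ := by
  rw [Ring.lie_def, Ring.lie_def, Algebra.TensorProduct.tmul_mul_tmul,
    Algebra.TensorProduct.tmul_mul_tmul, mul_comm t s, tmul_sub]

lemma transpose_std (i j : Fin N) : (single i j (1 : ℂ))ᵀ = single j i 1 := by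
  ext a b; simp [single, Matrix.transpose_apply, and_comm]

lemma sigmaO_std (i j : Fin N) :
    sigmaO N (single i j (1 : ℂ)) = -single j i 1 := by
  rw [show sigmaO N (single i j (1 : ℂ)) = -(single i j (1 : ℂ))ᵀ from rfl,
    transpose_std]

lemma std_mul (i j k l : Fin N) : single i j (1 : ℂ) * single k l 1
    = if j = k then single i l 1 else 0 := by
  split_ifs with h
  · subst h; rw [single_mul_single_same, one_mul]
  · exact single_mul_single_of_ne (c := (1 : ℂ)) (i := i) (j := j) (k := k) (h := h) (d := 1)

lemma T_neg_add (r a : ℤ) : (T (-(r + a)) : ℂ[T;T⁻¹]) = T (-r + -a) := by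
  rw [show -(r + a) = -r + -a by ring]
lemma T_neg_sub (r a : ℤ) : (T (-(r - a)) : ℂ[T;T⁻¹]) = T (-r + a) := by
  rw [show -(r - a) = -r + a by ring]
lemma T_sub' (r a : ℤ) : (T (r - a) : ℂ[T;T⁻¹]) = T (r + -a) := by
  rw [show r - a = r + -a by ring]

lemma TmulC (r a : ℤ) (C : ℂ[T;T⁻¹]) : T r * C * T a = T (r + a) * C := by
  rw [mul_right_comm, ← T_add]

lemma invert_coeff (r : ℤ) (m : ℕ) :
    (LaurentPolynomial.invert : ℂ[T;T⁻¹] ≃ₐ[ℂ] ℂ[T;T⁻¹]) (T r * (T 1 - 1) ^ m)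
      = T (-r) * (T (-1) - 1) ^ m := by
  simp only [_root_.map_mul, map_pow, _root_.map_sub, _root_.map_one, invert_T]

lemma invert_coeff' (r : ℤ) (m : ℕ) :
    (LaurentPolynomial.invert : ℂ[T;T⁻¹] ≃ₐ[ℂ] ℂ[T;T⁻¹]) (T (-r) * (T (-1) - 1) ^ m)
      = T r * (T 1 - 1) ^ m := by
  simp only [_root_.map_mul, map_pow, _root_.map_sub, _root_.map_one, invert_T, neg_neg]

lemma theta_G (m : ℕ) (i j : Fin N) (r : ℤ) : ThetaO N (G N m i j r) = G N m i j r := by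
  simp only [G, ThetaO, map_sub, TensorProduct.map_tmul, AlgEquiv.toLinearMap_apply,
    invert_coeff, invert_coeff', sigmaO_std, tmul_neg, neg_neg, sub_neg_eq_add, neg_tmul]
  exact (sub_eq_neg_add _ _).symm

set_option maxHeartbeats 2000000 in
lemma bracket_G (m : ℕ) (i j k l : Fin N) (r a : ℤ) :
    ⁅G N m i j r,
      ((T a ⊗ₜ[ℂ] single k l 1 : LA N) - T (-a) ⊗ₜ[ℂ] single l k 1)⁆
    = (if j = k then (1:ℂ) else 0) • G N m i l (r + a)
      - (if l = i then (1:ℂ) else 0) • G N m k j (r + a)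
      - (if j = l then (1:ℂ) else 0) • G N m i k (r - a)
      + (if k = i then (1:ℂ) else 0) • G N m l j (r - a) := by
  simp only [G, LA_sub_lie, LA_lie_sub, LA_lie_tmul, Ring.lie_def (R := Matrix (Fin N) (Fin N) ℂ),
    std_mul, TensorProduct.tmul_sub, TmulC]
  by_cases h1 : j = k <;> by_cases h2 : l = i <;> by_cases h3 : j = l <;> by_cases h4 : k = i <;>
    simp only [@eq_comm _ i, @eq_comm _ _ j, h1, h2, h3, h4, if_true, if_false, ite_true,
      ite_false, not_false_iff, TensorProduct.tmul_zero, one_smul, zero_smul, sub_zero, zero_sub,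
      add_zero, zero_add, neg_neg, T_neg_add, T_neg_sub, T_sub'] <;>
    (try split_ifs) <;>
    (try simp only [TensorProduct.tmul_zero, one_smul, zero_smul, smul_zero, add_zero, zero_add,
      sub_zero, zero_sub, neg_neg, sub_self]) <;>
    first
      | module
      | abel1
      | simp_all

lemma bracket_G_mem (m : ℕ) (i j k l : Fin N) (r a : ℤ) :
    ⁅G N m i j r,
      ((T a ⊗ₜ[ℂ] single k l 1 : LA N) - T (-a) ⊗ₜ[ℂ] single l k 1)⁆
      ∈ Submodule.span ℂ (Ktw N m) := by
  rw [bracket_G]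
  refine add_mem (sub_mem (sub_mem (Submodule.smul_mem _ _ ?_) (Submodule.smul_mem _ _ ?_))
    (Submodule.smul_mem _ _ ?_)) (Submodule.smul_mem _ _ ?_) <;>
    exact Submodule.subset_span (G_mem_Ktw _ _ _ _)

/-- `y ↦ ⁅g, y + Θ y⁆` as a linear map. -/
def adTheta (N : ℕ) (g : LA N) : LA N →ₗ[ℂ] LA N where
  toFun y := ⁅g, y + ThetaO N y⁆
  map_add' p q := by
    show ⁅g, (p + q) + ThetaO N (p + q)⁆ = ⁅g, p + ThetaO N p⁆ + ⁅g, q + ThetaO N q⁆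
    rw [map_add, add_add_add_comm, LA_lie_add]
  map_smul' c p := by
    show ⁅g, c • p + ThetaO N (c • p)⁆ = c • ⁅g, p + ThetaO N p⁆
    rw [LinearMap.map_smul, ← smul_add, LA_lie_smul]

lemma adTheta_apply (g y : LA N) : adTheta N g y = ⁅g, y + ThetaO N y⁆ := rfl

lemma adTheta_mem (m : ℕ) (i j : Fin N) (r : ℤ) (p : LA N) :
    adTheta N (G N m i j r) p ∈ Submodule.span ℂ (Ktw N m) := by
  induction p using TensorProduct.induction_on with
  | zero => rw [map_zero]; exact zero_mem _
  | add p q hp hq => rw [map_add]; exact add_mem hp hq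
  | tmul f X =>
    induction f using LaurentPolynomial.induction_on' with
    | add f g hf hg => rw [add_tmul, map_add]; exact add_mem hf hg
    | C_mul_T n c =>
      have key : ∀ X' : Matrix (Fin N) (Fin N) ℂ,
          adTheta N (G N m i j r) ((T n : ℂ[T;T⁻¹]) ⊗ₜ[ℂ] X') ∈ Submodule.span ℂ (Ktw N m) := by
        intro X'
        induction X' using Matrix.induction_on' with
        | h_zero => rw [tmul_zero, map_zero]; exact zero_mem _
        | h_add p q hp hq => rw [tmul_add, map_add]; exact add_mem hp hq
        | h_std_basis k l x =>
          have hxs : single k l x = x • single k l (1 : ℂ) := by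
            rw [smul_single, smul_eq_mul, mul_one]
          rw [hxs, tmul_smul, LinearMap.map_smul]
          refine Submodule.smul_mem _ _ ?_
          have hform : (T n ⊗ₜ[ℂ] single k l 1 : LA N)
              + ThetaO N (T n ⊗ₜ[ℂ] single k l 1)
              = (T n ⊗ₜ[ℂ] single k l 1 : LA N)
                - T (-n) ⊗ₜ[ℂ] single l k 1 := by
            rw [ThetaO, TensorProduct.map_tmul, AlgEquiv.toLinearMap_apply, invert_T, sigmaO_std,
              tmul_neg, sub_eq_add_neg]
          rw [adTheta_apply, hform]
          exact bracket_G_mem m i j k l r n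
      have hsmul : ((C c * T n : ℂ[T;T⁻¹]) ⊗ₜ[ℂ] X : LA N) = c • (T n ⊗ₜ[ℂ] X) := by
        rw [smul_tmul', ← single_eq_C_mul_T]
        congr 1
        rw [LaurentPolynomial.T, AddMonoidAlgebra.smul_single, smul_eq_mul, mul_one]
      rw [hsmul, LinearMap.map_smul]
      exact Submodule.smul_mem _ _ (key X)

end Stmt14Aux

open Stmt14Aux in
/-- Each spanning element `E_{ij} s^r (s-1)^m - E_{ji} s^{-r} (s⁻¹-1)^m` lies in the
twisted loop algebra `o_N^{tw}[s,s⁻¹]` (the fixed points of `Θ`), and their ℂ-span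
`K_m^{tw}` is a Lie ideal of `o_N^{tw}[s,s⁻¹]`. -/
theorem stmt_14 (N m : ℕ) :
    (∀ z ∈ Ktw N m, ThetaO N z = z) ∧
    (∀ x ∈ Submodule.span ℂ (Ktw N m),
      ∀ y : ℂ[T;T⁻¹] ⊗[ℂ] Matrix (Fin N) (Fin N) ℂ, ThetaO N y = y →
        ⁅x, y⁆ ∈ Submodule.span ℂ (Ktw N m)) := by
  constructor
  · rintro z ⟨i, j, r, rfl⟩
    exact theta_G m i j r
  · intro x hx y hy
    induction hx using Submodule.span_induction with
    | mem z hz =>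
      obtain ⟨i, j, r, rfl⟩ := hz
      have hy2 : (2⁻¹ : ℂ) • (y + ThetaO N y) = y := by
        rw [hy, ← two_smul ℂ y, smul_smul]
        norm_num
      have : ⁅G N m i j r, y⁆ ∈ Submodule.span ℂ (Ktw N m) := by
        rw [← hy2, LA_lie_smul]
        exact Submodule.smul_mem _ _ (adTheta_mem m i j r y)
      exact this
    | zero => rw [LA_zero_lie]; exact zero_mem _
    | add a b _ _ ha hb => rw [LA_add_lie]; exact add_mem ha hb
    | smul c a _ ha => rw [LA_smul_lie]; exact Submodule.smul_mem _ _ ha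

end
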